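/- Generalizing the bit-serial OR/disable procedure to a finite nonempty multiset of w-bit naturals: at each bit position from most significant to least, s is the OR of bits of all currently alive numbers, and a number is disabled when its bit differs from s; the resulting output equals the maximum of the multiset. -/

import Mathlib

/-- One step of the bit-serial multiset max procedure at bit `i`.
State: (set of alive indices, accumulated output value).  `s` is the OR of
bit `i` of all alive numbers; indices whose bit differs from `s` are removed. -/
def listOrStep (L : List ℕ) : Finset (Fin L.length) × ℕ → ℕ → Finset (Fin L.length) × ℕ :=
  fun st i =>
    let A := st.1
    let s : Bool := decide (∃ j ∈ A, (L.get j).testBit i = true)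
    (A.filter (fun j => (L.get j).testBit i = s), st.2 + (if s then 2 ^ i else 0))

/-- Output of the bit-serial OR/disable procedure on a list of `w`-bit naturals,
scanning bits from index `w-1` down to `0`, all indices initially alive. -/
def listBitSerialMax (w : ℕ) (L : List ℕ) : ℕ :=
  (((List.range w).reverse).foldl (listOrStep L) (Finset.univ, 0)).2

lemma div_pow_succ' (a n : ℕ) : a / 2^n = 2 * (a / 2^(n+1)) + (a / 2^n) % 2 := by
  rw [pow_succ, ← Nat.div_div_eq_div_mul]
  omega

lemma foldr_max_mem (L : List ℕ) (h : L ≠ []) : L.foldr max 0 ∈ L := by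
  induction L with
  | nil => simp at h
  | cons a t ih =>
    rcases eq_or_ne t [] with rfl | ht
    · simp
    · rcases max_choice a (t.foldr max 0) with h1 | h1 <;> simp [List.foldr, h1, ih ht]

lemma le_foldr_max (L : List ℕ) : ∀ x ∈ L, x ≤ L.foldr max 0 := by
  induction L with
  | nil => simp
  | cons a t ih =>
    intro x hx
    rw [List.mem_cons] at hx
    rcases hx with rfl | hx
    · simp
    · exact le_trans (ih x hx) (le_max_right _ _)

lemma bitserial_aux (L : List ℕ) (M : ℕ) (j0 : Fin L.length) (hj0 : L.get j0 = M)
    (hle : ∀ j : Fin L.length, L.get j ≤ M) :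
    ∀ n (st : Finset (Fin L.length) × ℕ),
      st.1 = Finset.univ.filter (fun j => L.get j / 2^n = M / 2^n) →
      st.2 = 2^n * (M / 2^n) →
      (((List.range n).reverse).foldl (listOrStep L) st).2 = M := by
  intro n
  induction n with
  | zero => intro st h1 h2; simpa using h2
  | succ n ih =>
    intro st h1 h2
    rw [List.range_succ, List.reverse_append]
    simp only [List.reverse_singleton, List.singleton_append, List.foldl_cons]
    -- the OR bit equals bit n of the maximum
    have hs : (decide (∃ j ∈ st.1, (L.get j).testBit n = true)) = M.testBit n := by
      cases hb : M.testBit n with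
      | true =>
        have hj0' : j0 ∈ st.1 := by
          rw [h1, Finset.mem_filter]
          exact ⟨Finset.mem_univ _, by rw [hj0]⟩
        exact decide_eq_true ⟨j0, hj0', by rw [hj0, hb]⟩
      | false =>
        simp only [decide_eq_false_iff_not]
        rintro ⟨j, hjA, hjb⟩
        rw [h1, Finset.mem_filter] at hjA
        have hdiv : L.get j / 2^(n+1) = M / 2^(n+1) := hjA.2
        have hlej : L.get j / 2^n ≤ M / 2^n := Nat.div_le_div_right (hle j)
        have e1 := div_pow_succ' (L.get j) n
        have e2 := div_pow_succ' M n
        rw [Nat.testBit_eq_decide_div_mod_eq, decide_eq_true_eq] at hjb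
        rw [Nat.testBit_eq_decide_div_mod_eq, decide_eq_false_iff_not] at hb
        omega
    have hstep : listOrStep L st n =
        (st.1.filter (fun j => (L.get j).testBit n = M.testBit n),
         st.2 + (if M.testBit n then 2^n else 0)) := by
      simp only [listOrStep]
      rw [hs]
    rw [hstep]
    apply ih
    · -- new alive set
      show (st.1.filter _) = _
      rw [h1, Finset.filter_filter]
      ext j
      simp only [Finset.mem_filter, Finset.mem_univ, true_and]
      have e1 := div_pow_succ' (L.get j) n
      have e2 := div_pow_succ' M n
      rw [Nat.testBit_eq_decide_div_mod_eq, Nat.testBit_eq_decide_div_mod_eq, decide_eq_decide]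
      constructor
      · rintro ⟨hd, hbit⟩
        by_cases hx : L.get j / 2 ^ n % 2 = 1
        · have := hbit.mp hx; omega
        · have : ¬ (M / 2 ^ n % 2 = 1) := fun h => hx (hbit.mpr h)
          omega
      · intro hd
        constructor
        · rw [pow_succ, ← Nat.div_div_eq_div_mul, ← Nat.div_div_eq_div_mul, hd]
        · rw [hd]
    · -- new accumulator
      show st.2 + (if M.testBit n then 2^n else 0) = 2^n * (M / 2^n)
      rw [h2]
      have e2 := div_pow_succ' M n
      cases hb : M.testBit n with
      | true =>
        rw [Nat.testBit_eq_decide_div_mod_eq, decide_eq_true_eq] at hb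
        have hr : M / 2 ^ n = 2 * (M / 2 ^ (n + 1)) + 1 := by omega
        rw [if_pos rfl]
        rw [hr, pow_succ]
        ring
      | false =>
        rw [Nat.testBit_eq_decide_div_mod_eq, decide_eq_false_iff_not] at hb
        have hr : M / 2 ^ n = 2 * (M / 2 ^ (n + 1)) := by omega
        rw [if_neg (by simp)]
        rw [hr, pow_succ]
        ring

theorem listBitSerialMax_eq_max (w : ℕ) (L : List ℕ) (hne : L ≠ [])
    (hw : ∀ x ∈ L, x < 2 ^ w) :
    listBitSerialMax w L = L.foldr max 0 := by
  set M := L.foldr max 0 with hM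
  have hmem : M ∈ L := foldr_max_mem L hne
  obtain ⟨j0, hj0⟩ := List.mem_iff_get.mp hmem
  have hle : ∀ j : Fin L.length, L.get j ≤ M :=
    fun j => le_foldr_max L _ (List.get_mem L j)
  have hMlt : M < 2^w := hw M hmem
  apply bitserial_aux L M j0 hj0 hle w
  · symm
    apply Finset.filter_true_of_mem
    intro j _
    rw [Nat.div_eq_of_lt (hw _ (List.get_mem L j)), Nat.div_eq_of_lt hMlt]
  · simp [Nat.div_eq_of_lt hMlt]
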